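/- Let M be a positive integer, let k ≤ M, and let t_1 ≥ t_2 ≥ ⋯ ≥ t_k ≥ 0 be a sub-probability vector with total mass Σ_{i=1}^k t_i = 1 − T for some 0 ≤ T ≤ 1. Then there exists an M-type probability distribution p supported on the indices {1, …, k} such that Σ_{i=1}^k |p_i − t_i| ≤ k/(2M) + M T²/(2k), and consequently Σ_{i=1}^k |p_i − t_i| ≤ k/(2M) + T. -/

import Mathlib

/-- An `M`-type distribution: every entry is `c_i / M` for a nonnegative integer
`c_i ≤ M`, and the entries sum to one. -/
def IsMType (M : ℕ) (p : ℕ → ℝ) : Prop :=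
  HasSum p 1 ∧ ∃ c : ℕ → ℕ, (∀ i, c i ≤ M) ∧ ∀ i, p i = (c i : ℝ) / M

/-- Auxiliary: a subset of size `D` maximizing the sum of `f`, hence dominating
the complement pointwise. -/
lemma exists_max_subset (s : Finset ℕ) (f : ℕ → ℝ) (D : ℕ) (hD : D ≤ s.card) :
    ∃ S : Finset ℕ, S ⊆ s ∧ S.card = D ∧ ∀ i ∈ S, ∀ j ∈ s \ S, f j ≤ f i := by
  obtain ⟨S, hS, hmax⟩ := Finset.exists_max_image (s.powersetCard D) (fun S => ∑ i ∈ S, f i)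
    ((Finset.powersetCard_nonempty).mpr hD)
  rw [Finset.mem_powersetCard] at hS
  refine ⟨S, hS.1, hS.2, ?_⟩
  intro i hi j hj
  rw [Finset.mem_sdiff] at hj
  by_contra hlt
  push_neg at hlt
  have hjni : j ∉ S.erase i := fun h => hj.2 (Finset.mem_of_mem_erase h)
  have hS' : insert j (S.erase i) ∈ s.powersetCard D := by
    rw [Finset.mem_powersetCard]
    constructor
    · intro x hx
      rcases Finset.mem_insert.mp hx with h | h
      · exact h ▸ hj.1
      · exact hS.1 (Finset.mem_of_mem_erase h)
    · rw [Finset.card_insert_of_notMem hjni, Finset.card_erase_of_mem hi, hS.2]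
      have : 1 ≤ D := by
        have := Finset.card_pos.mpr ⟨i, hi⟩
        omega
      omega
  have hle := hmax _ hS'
  rw [Finset.sum_insert hjni] at hle
  have herase : ∑ x ∈ S.erase i, f x + f i = ∑ x ∈ S, f x := Finset.sum_erase_add S f hi
  linarith

theorem stmt4 (M k : ℕ) (hM : 0 < M) (hk : 0 < k) (hkM : k ≤ M)
    (t : ℕ → ℝ) (T : ℝ) (hT0 : 0 ≤ T) (hT1 : T ≤ 1)
    (hnn : ∀ i, i < k → 0 ≤ t i)
    (hord : ∀ i, i + 1 < k → t (i + 1) ≤ t i)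
    (hsum : ∑ i ∈ Finset.range k, t i = 1 - T) :
    ∃ p : ℕ → ℝ, IsMType M p ∧ (∀ i, k ≤ i → p i = 0) ∧
      (∑ i ∈ Finset.range k, |p i - t i|) ≤ (k : ℝ) / (2 * M) + M * T ^ 2 / (2 * k) ∧
      (∑ i ∈ Finset.range k, |p i - t i|) ≤ (k : ℝ) / (2 * M) + T := by
  classical
  have hM' : (0 : ℝ) < M := Nat.cast_pos.mpr hM
  have hk' : (0 : ℝ) < k := Nat.cast_pos.mpr hk
  set c : ℕ → ℕ := fun i => ⌊(M : ℝ) * t i⌋₊ with hcdef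
  set f : ℕ → ℝ := fun i => (M : ℝ) * t i - c i with hfdef
  have hMt : ∀ i < k, 0 ≤ (M : ℝ) * t i := fun i hi => mul_nonneg hM'.le (hnn i hi)
  have hf0 : ∀ i < k, 0 ≤ f i := by
    intro i hi
    simp only [hfdef, sub_nonneg]
    exact Nat.floor_le (hMt i hi)
  have hf1 : ∀ i < k, f i ≤ 1 := by
    intro i hi
    simp only [hfdef]
    have := Nat.lt_floor_add_one ((M : ℝ) * t i)
    push_cast at this ⊢
    linarith
  set C : ℕ := ∑ i ∈ Finset.range k, c i with hCdef
  set F : ℝ := ∑ i ∈ Finset.range k, f i with hFdef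
  have hFsum : F = (M : ℝ) * (1 - T) - C := by
    simp only [hFdef, hfdef, Finset.sum_sub_distrib, ← Finset.mul_sum, hsum]
    push_cast [hCdef]
    ring
  have hF0 : 0 ≤ F := Finset.sum_nonneg fun i hi => hf0 i (Finset.mem_range.mp hi)
  have hCM : C ≤ M := by
    have : (C : ℝ) ≤ M := by nlinarith
    exact_mod_cast this
  set D : ℕ := M - C with hDdef
  have hDval : (D : ℝ) = F + (M : ℝ) * T := by
    have : (D : ℝ) = (M : ℝ) - C := by
      rw [hDdef]; push_cast [hCM]; ring
    rw [this, hFsum]; ring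
  -- A generic construction from an increment vector `e` summing to `D`.
  have key : ∀ e : ℕ → ℕ, (∑ i ∈ Finset.range k, e i = D) →
      ∃ p : ℕ → ℝ, IsMType M p ∧ (∀ i, k ≤ i → p i = 0) ∧
        (∑ i ∈ Finset.range k, |p i - t i|)
          = (∑ i ∈ Finset.range k, |(e i : ℝ) - f i|) / M := by
    intro e he
    set d : ℕ → ℕ := fun i => if i < k then c i + e i else 0 with hddef
    have hdsum : ∑ i ∈ Finset.range k, d i = M := by
      have : ∑ i ∈ Finset.range k, d i = ∑ i ∈ Finset.range k, (c i + e i) :=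
        Finset.sum_congr rfl fun i hi => by simp [hddef, Finset.mem_range.mp hi]
      rw [this, Finset.sum_add_distrib, ← hCdef, he]
      omega
    refine ⟨fun i => (d i : ℝ) / M, ⟨?_, d, ?_, fun i => rfl⟩, ?_, ?_⟩
    · have h0 : ∀ i ∉ Finset.range k, ((d i : ℝ) / M) = 0 := by
        intro i hi
        simp only [Finset.mem_range, not_lt] at hi
        simp [hddef, Nat.not_lt.mpr hi]
      have h1 : HasSum (fun i => (d i : ℝ) / M) (∑ i ∈ Finset.range k, (d i : ℝ) / M) :=
        hasSum_sum_of_ne_finset_zero h0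
      have h2 : ∑ i ∈ Finset.range k, ((d i : ℝ) / M) = 1 := by
        rw [← Finset.sum_div]
        rw [show ∑ i ∈ Finset.range k, ((d i : ℝ)) = (M : ℝ) by exact_mod_cast hdsum]
        field_simp
      rwa [h2] at h1
    · intro i
      by_cases hik : i < k
      · calc d i ≤ ∑ j ∈ Finset.range k, d j :=
              Finset.single_le_sum (fun j _ => Nat.zero_le _) (Finset.mem_range.mpr hik)
          _ = M := hdsum
      · simp [hddef, hik]
    · intro i hi
      simp [hddef, Nat.not_lt.mpr hi]
    · rw [Finset.sum_div]
      refine Finset.sum_congr rfl fun i hi => ?_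
      have hik := Finset.mem_range.mp hi
      have hval : (d i : ℝ) / M - t i = ((e i : ℝ) - f i) / M := by
        simp only [hddef, if_pos hik, hfdef]
        push_cast
        field_simp
        ring
      show |(d i : ℝ) / M - t i| = _
      rw [hval, abs_div, abs_of_pos hM']
  by_cases hDk : k ≤ D
  · -- plenty of mass to distribute: every index gets at least one unit
    set e : ℕ → ℕ := fun i => 1 + if i = 0 then D - k else 0 with hedef
    have he : ∑ i ∈ Finset.range k, e i = D := by
      simp only [hedef, Finset.sum_add_distrib, Finset.sum_const, Finset.card_range, smul_eq_mul,
        mul_one, Finset.sum_ite_eq' (Finset.range k) 0, Finset.mem_range, hk, if_pos]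
      omega
    obtain ⟨p, hp1, hp2, hp3⟩ := key e he
    have herr : ∑ i ∈ Finset.range k, |(e i : ℝ) - f i| = (M : ℝ) * T := by
      have : ∀ i ∈ Finset.range k, |(e i : ℝ) - f i| = (e i : ℝ) - f i := by
        intro i hi
        have hik := Finset.mem_range.mp hi
        have h1 : (1 : ℝ) ≤ (e i : ℝ) := by
          have : 1 ≤ e i := by simp [hedef]
          exact_mod_cast this
        exact abs_of_nonneg (by linarith [hf1 i hik])
      rw [Finset.sum_congr rfl this, Finset.sum_sub_distrib, ← hFdef]
      have : ∑ i ∈ Finset.range k, ((e i : ℝ)) = (D : ℝ) := by exact_mod_cast he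
      rw [this, hDval]; ring
    have herrT : ∑ i ∈ Finset.range k, |p i - t i| = T := by
      rw [hp3, herr]; field_simp
    refine ⟨p, hp1, hp2, ?_, ?_⟩
    · rw [herrT]
      rw [div_add_div _ _ (by positivity) (by positivity), le_div_iff₀ (by positivity)]
      nlinarith [sq_nonneg ((k : ℝ) - M * T)]
    · rw [herrT]
      have : (0 : ℝ) ≤ (k : ℝ) / (2 * M) := by positivity
      linarith
  · -- D < k : increment the D indices with the largest fractional parts
    push_neg at hDk
    obtain ⟨S, hSsub, hScard, hSmax⟩ := exists_max_subset (Finset.range k) f D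
      (by rw [Finset.card_range]; omega)
    set e : ℕ → ℕ := fun i => if i ∈ S then 1 else 0 with hedef
    have he : ∑ i ∈ Finset.range k, e i = D := by
      simp only [hedef]
      rw [Finset.sum_ite_mem, Finset.inter_eq_right.mpr hSsub, Finset.sum_const, hScard]
      simp
    obtain ⟨p, hp1, hp2, hp3⟩ := key e he
    set A : ℝ := ∑ i ∈ S, f i with hAdef
    set R : ℝ := ∑ i ∈ Finset.range k \ S, f i with hRdef
    have hFAR : R + A = F := by rw [hRdef, hAdef, hFdef]; exact Finset.sum_sdiff hSsub
    have hA0 : 0 ≤ A := Finset.sum_nonneg fun i hi =>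
      hf0 i (Finset.mem_range.mp (hSsub hi))
    have hR0 : 0 ≤ R := Finset.sum_nonneg fun i hi =>
      hf0 i (Finset.mem_range.mp (Finset.mem_sdiff.mp hi).1)
    have hcard_sdiff : (Finset.range k \ S).card = k - D := by
      rw [Finset.card_sdiff_of_subset hSsub, Finset.card_range, hScard]
    -- pairwise domination gives k * A ≥ D * F
    have hkA : (D : ℝ) * R ≤ ((k : ℝ) - D) * A := by
      have hpair : ∑ i ∈ S, ∑ j ∈ Finset.range k \ S, f j
          ≤ ∑ i ∈ S, ∑ j ∈ Finset.range k \ S, f i :=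
        Finset.sum_le_sum fun i hi => Finset.sum_le_sum fun j hj => hSmax i hi j hj
      have hL : ∑ i ∈ S, ∑ j ∈ Finset.range k \ S, f j = (D : ℝ) * R := by
        rw [Finset.sum_const, hScard, ← hRdef, nsmul_eq_mul]
      have hR' : ∑ i ∈ S, ∑ j ∈ Finset.range k \ S, f i = ((k : ℝ) - D) * A := by
        have : ∀ i ∈ S, ∑ j ∈ Finset.range k \ S, f i = ((k : ℝ) - D) * f i := by
          intro i hi
          rw [Finset.sum_const, hcard_sdiff, nsmul_eq_mul]
          congr 1
          push_cast [Nat.cast_sub hDk.le]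
          ring
        rw [Finset.sum_congr rfl this, ← Finset.mul_sum, ← hAdef]
      rw [hL, hR'] at hpair
      exact hpair
    have herr : ∑ i ∈ Finset.range k, |(e i : ℝ) - f i| = (D : ℝ) + F - 2 * A := by
      rw [← Finset.sum_sdiff hSsub]
      have h1 : ∑ i ∈ Finset.range k \ S, |(e i : ℝ) - f i| = R := by
        rw [hRdef]
        refine Finset.sum_congr rfl fun i hi => ?_
        have hiS := (Finset.mem_sdiff.mp hi).2
        have hik := Finset.mem_range.mp (Finset.mem_sdiff.mp hi).1
        simp only [hedef, if_neg hiS, Nat.cast_zero, zero_sub, abs_neg]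
        exact abs_of_nonneg (hf0 i hik)
      have h2 : ∑ i ∈ S, |(e i : ℝ) - f i| = (D : ℝ) - A := by
        have : ∀ i ∈ S, |(e i : ℝ) - f i| = 1 - f i := by
          intro i hi
          have hik := Finset.mem_range.mp (hSsub hi)
          simp only [hedef, if_pos hi, Nat.cast_one]
          exact abs_of_nonneg (by linarith [hf1 i hik])
        rw [Finset.sum_congr rfl this, Finset.sum_sub_distrib, Finset.sum_const, hScard, ← hAdef]
        simp
      rw [h1, h2]
      linarith
    clear_value c f C F D A R
    have hRA : R = F - A := by linarith [hFAR]
    have hDF : F * (F + (M : ℝ) * T) ≤ (k : ℝ) * A := by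
      have h := hkA
      rw [hDval, hRA] at h
      linarith only [h]
    have hkey1 : 2 * (k : ℝ) * ((D : ℝ) + F - 2 * A) ≤ (k : ℝ)^2 + (M : ℝ)^2 * T^2 := by
      rw [hDval]
      linarith only [sq_nonneg ((k : ℝ) - 2 * F - M * T), hDF]
    have hkey2 : 2 * (k : ℝ) * ((D : ℝ) + F - 2 * A) ≤ (k : ℝ)^2 + 2 * k * M * T := by
      rw [hDval]
      linarith only [sq_nonneg ((k : ℝ) - 2 * F), hDF,
        mul_nonneg (mul_nonneg hF0 hM'.le) hT0]
    refine ⟨p, hp1, hp2, ?_, ?_⟩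
    · rw [hp3, herr]
      have h1 : ((D : ℝ) + F - 2 * A) / M ≤ ((k : ℝ)^2 + (M : ℝ)^2 * T^2) / (2 * k * M) := by
        rw [div_le_div_iff₀ hM' (by positivity)]
        linarith only [mul_le_mul_of_nonneg_right hkey1 hM'.le]
      have h2 : ((k : ℝ)^2 + (M : ℝ)^2 * T^2) / (2 * k * M)
          = (k : ℝ) / (2 * M) + M * T^2 / (2 * k) := by
        field_simp
      linarith [h2 ▸ h1]
    · rw [hp3, herr]
      rw [div_le_iff₀ hM']
      have hexp : ((k : ℝ) / (2 * M) + T) * M = (k : ℝ) / 2 + M * T := by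
        field_simp
      rw [hexp]
      have h2k : (0 : ℝ) < 2 * k := by positivity
      rw [← mul_le_mul_iff_right₀ h2k]
      linarith only [hkey2]
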